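/- Let G=(V,E) be a polytree and let i,j∈V be any two vertices such that a 2-trek between i and j exists. Then every 2×2 minor of the trek-matrix A_{i,j} belongs to the third-order moment ideal I^{≤3}(G). -/

import Mathlib

open MvPolynomial Matrix Finset

namespace LNG

variable {n : ℕ}

/-- A directed path in the directed graph `E`, recorded as the (nonempty) list of
visited vertices. -/
def IsDiPath (E : Fin n → Fin n → Prop) : List (Fin n) → Prop
  | [] => False
  | [_] => True
  | a :: b :: l => E a b ∧ IsDiPath E (b :: l)

/-- `p` is a directed path from `v` to `i` (possibly of length zero). -/
def IsPathFromTo (E : Fin n → Fin n → Prop) (v : Fin n) (p : List (Fin n)) (i : Fin n) : Prop :=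
  IsDiPath E p ∧ p.head? = some v ∧ p.getLast? = some i

/-- A `k`-trek with top `v` between the vertices `i 0, …, i (k-1)`: an ordered collection
of directed paths with common source `v`, where the `r`-th path has sink `i r`. -/
def IsTrek (E : Fin n → Fin n → Prop) {k : ℕ} (v : Fin n)
    (P : Fin k → List (Fin n)) (i : Fin k → Fin n) : Prop :=
  ∀ r, IsPathFromTo E v (P r) (i r)

/-- A simple `k`-trek: the top is the only vertex lying on all `k` paths. -/
def IsSimpleTrek (E : Fin n → Fin n → Prop) {k : ℕ} (v : Fin n)
    (P : Fin k → List (Fin n)) (i : Fin k → Fin n) : Prop :=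
  IsTrek E v P i ∧ ∀ w : Fin n, (∀ r, w ∈ P r) → w = v

/-- A 2-trek with top `v` between `i` and `j`. -/
def IsTrek2 (E : Fin n → Fin n → Prop) (v : Fin n) (p q : List (Fin n)) (i j : Fin n) : Prop :=
  IsPathFromTo E v p i ∧ IsPathFromTo E v q j

def IsSimpleTrek2 (E : Fin n → Fin n → Prop) (v : Fin n) (p q : List (Fin n))
    (i j : Fin n) : Prop :=
  IsTrek2 E v p q i j ∧ ∀ w : Fin n, w ∈ p → w ∈ q → w = v

/-- A 3-trek with top `v` between `i`, `j` and `k`. -/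
def IsTrek3 (E : Fin n → Fin n → Prop) (v : Fin n) (p q r : List (Fin n))
    (i j k : Fin n) : Prop :=
  IsPathFromTo E v p i ∧ IsPathFromTo E v q j ∧ IsPathFromTo E v r k

def IsSimpleTrek3 (E : Fin n → Fin n → Prop) (v : Fin n) (p q r : List (Fin n))
    (i j k : Fin n) : Prop :=
  IsTrek3 E v p q r i j k ∧ ∀ w : Fin n, w ∈ p → w ∈ q → w ∈ r → w = v

def Trek2Exists (E : Fin n → Fin n → Prop) (i j : Fin n) : Prop :=
  ∃ v p q, IsTrek2 E v p q i j

def Trek3Exists (E : Fin n → Fin n → Prop) (i j k : Fin n) : Prop :=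
  ∃ v p q r, IsTrek3 E v p q r i j k

/-- The underlying undirected (simple) graph of the directed graph `E`. -/
def underlying (E : Fin n → Fin n → Prop) : SimpleGraph (Fin n) where
  Adj a b := a ≠ b ∧ (E a b ∨ E b a)
  symm := ⟨fun a b h => ⟨h.1.symm, h.2.symm⟩⟩
  loopless := ⟨fun a h => h.1 rfl⟩

/-- A polytree: a topologically ordered DAG whose underlying undirected graph is a tree. -/
def IsPolytree (E : Fin n → Fin n → Prop) : Prop :=
  (∀ i j : Fin n, E i j → i < j) ∧ (underlying E).IsTree

/-! ### Variables of the moment polynomial ring -/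

abbrev SIdx (n : ℕ) := {p : Fin n × Fin n // p.1 ≤ p.2}
abbrev TIdx (n : ℕ) := {p : Fin n × Fin n × Fin n // p.1 ≤ p.2.1 ∧ p.2.1 ≤ p.2.2}

/-- Variables `s_{ij}` (`1 ≤ i ≤ j ≤ n`) and `t_{ijk}` (`1 ≤ i ≤ j ≤ k ≤ n`). -/
abbrev MomVar (n : ℕ) := SIdx n ⊕ TIdx n

/-- Parameter variables `a_i`, `b_i` (`i ∈ V`) and `λ_{ij}`. -/
abbrev PVar (n : ℕ) := (Fin n ⊕ Fin n) ⊕ Fin n × Fin n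

/-- Median of three. -/
def mid3 (i j k : Fin n) : Fin n := max (min i j) (min (max i j) k)

lemma min3_le_mid3 (i j k : Fin n) : min i (min j k) ≤ mid3 i j k :=
  le_trans (le_min (min_le_left _ _) (le_trans (min_le_right i (min j k)) (min_le_left j k)))
    (le_max_left _ _)

lemma mid3_le_max3 (i j k : Fin n) : mid3 i j k ≤ max i (max j k) :=
  max_le (le_trans (min_le_left i j) (le_max_left _ _))
    (le_trans (min_le_right (max i j) k) (le_trans (le_max_right j k) (le_max_right i _)))

/-- The variable `s_{ij}` (indices sorted). -/
noncomputable def svar (i j : Fin n) : MvPolynomial (MomVar n) ℝ :=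
  X (Sum.inl ⟨(min i j, max i j), min_le_max⟩)

/-- The variable `t_{ijk}` (indices sorted). -/
noncomputable def tvar (i j k : Fin n) : MvPolynomial (MomVar n) ℝ :=
  X (Sum.inr ⟨(min i (min j k), mid3 i j k, max i (max j k)),
      min3_le_mid3 i j k, mid3_le_max3 i j k⟩)

/-- Evaluation of the moment variables at a concrete pair `(S, T)`. -/
def evalVar (S : Matrix (Fin n) (Fin n) ℝ) (T : Fin n → Fin n → Fin n → ℝ) :
    MomVar n → ℝ
  | Sum.inl p => S p.1.1 p.1.2
  | Sum.inr p => T p.1.1 p.1.2.1 p.1.2.2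

/-! ### The third-order moment model -/

/-- `Λ ∈ ℝ^E`. -/
def Supported (E : Fin n → Fin n → Prop) (Λ : Matrix (Fin n) (Fin n) ℝ) : Prop :=
  ∀ i j, ¬ E i j → Λ i j = 0

/-- Covariance matrix `(I-Λ)^{-T} Ω⁽²⁾ (I-Λ)^{-1}`. -/
noncomputable def momentS (Λ : Matrix (Fin n) (Fin n) ℝ) (ω2 : Fin n → ℝ) :
    Matrix (Fin n) (Fin n) ℝ :=
  ((1 - Λ)⁻¹)ᵀ * Matrix.diagonal ω2 * (1 - Λ)⁻¹

/-- Third moment tensor `Ω⁽³⁾ ∙ (I-Λ)^{-1} ∙ (I-Λ)^{-1} ∙ (I-Λ)^{-1}`. -/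
noncomputable def momentT (Λ : Matrix (Fin n) (Fin n) ℝ) (ω3 : Fin n → ℝ)
    (i j k : Fin n) : ℝ :=
  ∑ a, ω3 a * (1 - Λ)⁻¹ a i * (1 - Λ)⁻¹ a j * (1 - Λ)⁻¹ a k

/-- Membership in the third-order moment model `M^{≤3}(G)`. -/
def MomentModel (E : Fin n → Fin n → Prop)
    (S : Matrix (Fin n) (Fin n) ℝ) (T : Fin n → Fin n → Fin n → ℝ) : Prop :=
  ∃ (Λ : Matrix (Fin n) (Fin n) ℝ) (ω2 ω3 : Fin n → ℝ),
    Supported E Λ ∧ (∀ i, 0 < ω2 i) ∧ S = momentS Λ ω2 ∧ T = momentT Λ ω3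

/-- The third-order moment (vanishing) ideal `I^{≤3}(G)`. -/
noncomputable def momentIdeal (E : Fin n → Fin n → Prop) : Ideal (MvPolynomial (MomVar n) ℝ) where
  carrier := {f | ∀ S T, MomentModel E S T → eval (evalVar S T) f = 0}
  add_mem' := by
    intro f g hf hg S T h
    simp [map_add, hf S T h, hg S T h]
  zero_mem' := by
    intro S T h
    simp
  smul_mem' := by
    intro c f hf S T h
    simp [smul_eq_mul, _root_.map_mul, hf S T h]

/-- A fully symmetric 3-tensor. -/
def SymTensor3 (T : Fin n → Fin n → Fin n → ℝ) : Prop :=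
  ∀ i j k : Fin n, T i j k = T j i k ∧ T i j k = T i k j

/-! ### Trek matrices and their minors -/

/-- `top(i,k) = top(j,k)`: there is a common vertex `v` that is the top of the
simple 2-treks between `i,k` and between `j,k`. -/
def SameTop2 (E : Fin n → Fin n → Prop) (i j k : Fin n) : Prop :=
  ∃ v, (∃ p q, IsSimpleTrek2 E v p q i k) ∧ (∃ p q, IsSimpleTrek2 E v p q j k)

/-- `top(i,l,m) = top(j,l,m)`. -/
def SameTop3 (E : Fin n → Fin n → Prop) (i j l m : Fin n) : Prop :=
  ∃ v, (∃ p q r, IsSimpleTrek3 E v p q r i l m) ∧ (∃ p q r, IsSimpleTrek3 E v p q r j l m)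

/-- `f` is a `2 × 2` minor of the trek-matrix `A_{i,j}`. -/
def IsTrekMinorOf (E : Fin n → Fin n → Prop) (i j : Fin n)
    (f : MvPolynomial (MomVar n) ℝ) : Prop :=
  (∃ k k', SameTop2 E i j k ∧ SameTop2 E i j k' ∧
      f = svar i k * svar j k' - svar j k * svar i k') ∨
  (∃ k l m, SameTop2 E i j k ∧ SameTop3 E i j l m ∧
      f = svar i k * tvar j l m - svar j k * tvar i l m) ∨
  (∃ l m l' m', SameTop3 E i j l m ∧ SameTop3 E i j l' m' ∧
      f = tvar i l m * tvar j l' m' - tvar j l m * tvar i l' m')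

/-- Variables `s_{ij}` with no 2-trek between `i,j` and `t_{ijk}` with no 3-trek. -/
def noTrekVars (E : Fin n → Fin n → Prop) : Set (MvPolynomial (MomVar n) ℝ) :=
  {f | (∃ i j, ¬ Trek2Exists E i j ∧ f = svar i j) ∨
       (∃ i j k, ¬ Trek3Exists E i j k ∧ f = tvar i j k)}

/-- The 2-minors of the trek-matrices `A_{i,j}` over edges `i → j` of `G`. -/
def edgeMinors (E : Fin n → Fin n → Prop) : Set (MvPolynomial (MomVar n) ℝ) :=
  {f | ∃ i j, E i j ∧ IsTrekMinorOf E i j f}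

/-- The 2-minors of all trek-matrices `A_{i,j}`. -/
def allMinors (E : Fin n → Fin n → Prop) : Set (MvPolynomial (MomVar n) ℝ) :=
  {f | ∃ i j, Trek2Exists E i j ∧ IsTrekMinorOf E i j f}

/-! ### The simple trek rule parametrization -/

/-- Product of the edge weights `w` along a path. -/
def pathProd {R : Type*} [CommSemiring R] (w : Fin n → Fin n → R) : List (Fin n) → R
  | [] => 1
  | [_] => 1
  | a :: b :: l => w a b * pathProd w (b :: l)

/-- Sum of a weight over all simple 2-treks between `i` and `j`. -/
noncomputable def trekSum2 {M : Type*} [AddCommMonoid M] (E : Fin n → Fin n → Prop)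
    (wt : Fin n → List (Fin n) → List (Fin n) → M) (i j : Fin n) : M :=
  ∑ᶠ τ : {x : Fin n × List (Fin n) × List (Fin n) //
      IsSimpleTrek2 E x.1 x.2.1 x.2.2 i j}, wt τ.1.1 τ.1.2.1 τ.1.2.2

/-- Sum of a weight over all simple 3-treks between `i`, `j` and `k`. -/
noncomputable def trekSum3 {M : Type*} [AddCommMonoid M] (E : Fin n → Fin n → Prop)
    (wt : Fin n → List (Fin n) → List (Fin n) → List (Fin n) → M) (i j k : Fin n) : M :=
  ∑ᶠ τ : {x : Fin n × List (Fin n) × List (Fin n) × List (Fin n) //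
      IsSimpleTrek3 E x.1 x.2.1 x.2.2.1 x.2.2.2 i j k},
    wt τ.1.1 τ.1.2.1 τ.1.2.2.1 τ.1.2.2.2

/-- The `(i,j)` coordinate of the simple trek rule parametrization `φ_G^*` (covariances). -/
noncomputable def phiS (E : Fin n → Fin n → Prop) (a : Fin n → ℝ)
    (Λ : Matrix (Fin n) (Fin n) ℝ) (i j : Fin n) : ℝ :=
  trekSum2 E (fun v p q => a v * (pathProd (fun x y => Λ x y) p * pathProd (fun x y => Λ x y) q)) i j

/-- The `(i,j,k)` coordinate of the simple trek rule parametrization `φ_G^*` (third moments). -/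
noncomputable def phiT (E : Fin n → Fin n → Prop) (b : Fin n → ℝ)
    (Λ : Matrix (Fin n) (Fin n) ℝ) (i j k : Fin n) : ℝ :=
  trekSum3 E (fun v p q r => b v * (pathProd (fun x y => Λ x y) p *
    pathProd (fun x y => Λ x y) q * pathProd (fun x y => Λ x y) r)) i j k

/-- The ring homomorphism `φ_G` of the simple trek rule. -/
noncomputable def phiG (E : Fin n → Fin n → Prop) :
    MvPolynomial (MomVar n) ℝ →ₐ[ℝ] MvPolynomial (PVar n) ℝ :=
  aeval fun v => match v with
    | Sum.inl p => trekSum2 E (fun v' pl ql =>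
        X (Sum.inl (Sum.inl v')) * (pathProd (fun x y => X (Sum.inr (x, y))) pl *
          pathProd (fun x y => X (Sum.inr (x, y))) ql)) p.1.1 p.1.2
    | Sum.inr p => trekSum3 E (fun v' pl ql rl =>
        X (Sum.inl (Sum.inr v')) * (pathProd (fun x y => X (Sum.inr (x, y))) pl *
          pathProd (fun x y => X (Sum.inr (x, y))) ql *
          pathProd (fun x y => X (Sum.inr (x, y))) rl)) p.1.1 p.1.2.1 p.1.2.2

/-! ### Auxiliary lemmas -/

section Aux

variable {E : Fin n → Fin n → Prop}

lemma isDiPath_chain' : ∀ {l : List (Fin n)}, IsDiPath E l → l.Chain' E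
  | [], h => h.elim
  | [_], _ => List.isChain_singleton _
  | _ :: _ :: _, h => List.isChain_cons_cons.2 ⟨h.1, isDiPath_chain' h.2⟩

lemma isDiPath_of_chain' : ∀ {l : List (Fin n)}, l ≠ [] → l.Chain' E → IsDiPath E l
  | [], h, _ => (h rfl).elim
  | [_], _, _ => trivial
  | _ :: _ :: _, _, h =>
    ⟨(List.isChain_cons_cons.1 h).1,
      isDiPath_of_chain' (List.cons_ne_nil _ _) (List.isChain_cons_cons.1 h).2⟩

lemma isPathFromTo_iff {v i : Fin n} {p : List (Fin n)} :
    IsPathFromTo E v p i ↔ p.Chain' E ∧ p.head? = some v ∧ p.getLast? = some i := by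
  constructor
  · rintro ⟨h1, h2, h3⟩; exact ⟨isDiPath_chain' h1, h2, h3⟩
  · rintro ⟨h1, h2, h3⟩
    refine ⟨isDiPath_of_chain' ?_ h1, h2, h3⟩
    rintro rfl; simp at h2

lemma IsPathFromTo.exists_cons {v i : Fin n} {p : List (Fin n)}
    (h : IsPathFromTo E v p i) : ∃ t, p = v :: t := by
  obtain ⟨-, h2, -⟩ := h
  cases p with
  | nil => simp at h2
  | cons a t =>
    simp only [List.head?_cons, Option.some.injEq] at h2
    exact ⟨t, by rw [h2]⟩

lemma mem_of_head?_eq {α : Type*} {l : List α} {a : α} (h : l.head? = some a) : a ∈ l := by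
  cases l with
  | nil => simp at h
  | cons x t => simp only [List.head?_cons, Option.some.injEq] at h; simp [h]

lemma mem_of_getLast?_eq {α : Type*} : ∀ {l : List α} {a : α}, l.getLast? = some a → a ∈ l
  | [], _, h => by simp at h
  | [x], a, h => by simp at h; simp [h]
  | x :: y :: t, a, h => by
    rw [List.getLast?_cons_cons] at h
    exact List.mem_cons_of_mem _ (mem_of_getLast?_eq h)

lemma path_pairwise (hlt : ∀ i j, E i j → i < j) {v i : Fin n} {p : List (Fin n)}
    (h : IsPathFromTo E v p i) : p.Pairwise (· < ·) :=
  List.isChain_iff_pairwise.1 ((isPathFromTo_iff.1 h).1.imp fun a b hab => hlt a b hab)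

lemma path_nodup (hlt : ∀ i j, E i j → i < j) {v i : Fin n} {p : List (Fin n)}
    (h : IsPathFromTo E v p i) : p.Nodup :=
  (path_pairwise hlt h).imp ne_of_lt

lemma path_head_mem {v i : Fin n} {p : List (Fin n)} (h : IsPathFromTo E v p i) : v ∈ p := by
  obtain ⟨t, rfl⟩ := h.exists_cons; exact List.mem_cons_self

lemma path_last_mem {v i : Fin n} {p : List (Fin n)} (h : IsPathFromTo E v p i) : i ∈ p :=
  mem_of_getLast?_eq (isPathFromTo_iff.1 h).2.2

lemma path_head_le (hlt : ∀ i j, E i j → i < j) {v i w : Fin n} {p : List (Fin n)}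
    (h : IsPathFromTo E v p i) (hw : w ∈ p) : v ≤ w := by
  obtain ⟨t, rfl⟩ := h.exists_cons
  have hp := path_pairwise hlt h
  rcases List.mem_cons.1 hw with rfl | hw
  · exact le_rfl
  · exact ((List.pairwise_cons.1 hp).1 w hw).le

lemma path_le (hlt : ∀ i j, E i j → i < j) {v i : Fin n} {p : List (Fin n)}
    (h : IsPathFromTo E v p i) : v ≤ i :=
  path_head_le hlt h (path_last_mem h)

lemma exists_walk (hlt : ∀ i j, E i j → i < j) :
    ∀ (l : List (Fin n)) (a b : Fin n), l.Chain' E → l.head? = some a →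
      l.getLast? = some b → ∃ w : (underlying E).Walk a b, w.support = l := by
  intro l
  induction l with
  | nil => intro a b _ h1 _; simp at h1
  | cons x t ih =>
    intro a b hc h1 h2
    simp only [List.head?_cons, Option.some.injEq] at h1
    subst h1
    cases t with
    | nil =>
      simp only [List.getLast?_singleton, Option.some.injEq] at h2
      subst h2
      exact ⟨SimpleGraph.Walk.nil, by simp⟩
    | cons y t' =>
      rw [List.getLast?_cons_cons] at h2
      have hc' := List.isChain_cons_cons.1 hc
      obtain ⟨w', hw'⟩ := ih y b hc'.2 rfl h2
      have hadj : (underlying E).Adj x y := ⟨(hlt _ _ hc'.1).ne, Or.inl hc'.1⟩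
      exact ⟨SimpleGraph.Walk.cons hadj w', by simp [hw']⟩

lemma path_unique (hlt : ∀ i j, E i j → i < j) (htree : (underlying E).IsTree)
    {v i : Fin n} {p q : List (Fin n)}
    (h1 : IsPathFromTo E v p i) (h2 : IsPathFromTo E v q i) : p = q := by
  obtain ⟨c1, e1, f1⟩ := isPathFromTo_iff.1 h1
  obtain ⟨c2, e2, f2⟩ := isPathFromTo_iff.1 h2
  obtain ⟨w1, hw1⟩ := exists_walk hlt p v i c1 e1 f1
  obtain ⟨w2, hw2⟩ := exists_walk hlt q v i c2 e2 f2
  have p1 : w1.IsPath := SimpleGraph.Walk.IsPath.mk' (hw1 ▸ path_nodup hlt h1)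
  have p2 : w2.IsPath := SimpleGraph.Walk.IsPath.mk' (hw2 ▸ path_nodup hlt h2)
  have := (htree.existsUnique_path v i).unique p1 p2
  rw [← hw1, ← hw2, this]

lemma path_split {v i w : Fin n} {p : List (Fin n)} (h : IsPathFromTo E v p i)
    (hw : w ∈ p) : ∃ p₁ p₂, IsPathFromTo E v p₁ w ∧ IsPathFromTo E w p₂ i ∧
      p = p₁ ++ p₂.tail := by
  obtain ⟨c, e, f⟩ := isPathFromTo_iff.1 h
  obtain ⟨s, t, rfl⟩ := List.append_of_mem hw
  refine ⟨s ++ [w], w :: t, ?_, ?_, by simp⟩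
  · refine isPathFromTo_iff.2 ⟨c.prefix ⟨t, by simp⟩, ?_, List.getLast?_concat⟩
    cases s with
    | nil => simpa using e
    | cons x s' => simpa using e
  · refine isPathFromTo_iff.2 ⟨c.suffix ⟨s, rfl⟩, rfl, ?_⟩
    rw [← f, List.getLast?_append_cons]

lemma path_concat {a v i : Fin n} {p q : List (Fin n)}
    (h1 : IsPathFromTo E a p v) (h2 : IsPathFromTo E v q i) :
    IsPathFromTo E a (p ++ q.tail) i := by
  obtain ⟨c1, e1, f1⟩ := isPathFromTo_iff.1 h1
  obtain ⟨c2, e2, f2⟩ := isPathFromTo_iff.1 h2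
  obtain ⟨t, rfl⟩ := h2.exists_cons
  cases t with
  | nil =>
    simp only [List.getLast?_singleton, Option.some.injEq] at f2
    subst f2
    simpa using h1
  | cons y t' =>
    refine isPathFromTo_iff.2 ⟨?_, ?_, ?_⟩
    · refine List.isChain_append.2 ⟨c1, c2.tail, ?_⟩
      intro x hx z hz
      rw [f1, Option.mem_def, Option.some.injEq] at hx
      simp only [List.tail_cons, List.head?_cons, Option.mem_def, Option.some.injEq] at hz
      subst hx; subst hz
      exact (List.isChain_cons_cons.1 c2).1
    · obtain ⟨tp, rfl⟩ := h1.exists_cons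
      simp
    · rw [List.tail_cons, List.getLast?_append_cons]
      rw [List.getLast?_cons_cons] at f2
      exact f2

lemma path_cons {a b i : Fin n} {u : List (Fin n)} (hab : E a b)
    (h : IsPathFromTo E b u i) : IsPathFromTo E a (a :: u) i := by
  obtain ⟨t, rfl⟩ := h.exists_cons
  refine isPathFromTo_iff.2 ⟨List.isChain_cons_cons.2 ⟨hab, (isPathFromTo_iff.1 h).1⟩, rfl, ?_⟩
  rw [List.getLast?_cons_cons]
  exact (isPathFromTo_iff.1 h).2.2

lemma pathProd_concat {R : Type*} [CommSemiring R] (w : Fin n → Fin n → R) :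
    ∀ {p : List (Fin n)} (q : List (Fin n)) {v : Fin n}, p.getLast? = some v →
      q.head? = some v → pathProd w (p ++ q.tail) = pathProd w p * pathProd w q := by
  intro p
  induction p with
  | nil => intro q v h _; simp at h
  | cons x s ih =>
    intro q v hl hh
    cases s with
    | nil =>
      simp only [List.getLast?_singleton, Option.some.injEq] at hl
      subst hl
      cases q with
      | nil => simp at hh
      | cons y u =>
        simp only [List.head?_cons, Option.some.injEq] at hh
        subst hh
        simp [pathProd]
    | cons y s' =>
      rw [List.getLast?_cons_cons] at hl
      have hih := ih q hl hh
      show pathProd w (x :: ((y :: s') ++ q.tail)) = pathProd w (x :: y :: s') * pathProd w q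
      rw [List.cons_append]
      show w x y * pathProd w ((y :: s') ++ q.tail) = (w x y * pathProd w (y :: s')) * pathProd w q
      rw [hih, mul_assoc]

end Aux
section Aux2

variable {E : Fin n → Fin n → Prop}

open Classical in
/-- Unique-path weight of a polytree. -/
noncomputable def dp (E : Fin n → Fin n → Prop) (Λ : Matrix (Fin n) (Fin n) ℝ)
    (a i : Fin n) : ℝ :=
  if h : ∃ p, IsPathFromTo E a p i then pathProd (fun x y => Λ x y) h.choose else 0

variable {Λ : Matrix (Fin n) (Fin n) ℝ}

lemma dp_eq_pathProd (hlt : ∀ i j, E i j → i < j) (htree : (underlying E).IsTree)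
    {a i : Fin n} {p : List (Fin n)} (h : IsPathFromTo E a p i) :
    dp E Λ a i = pathProd (fun x y => Λ x y) p := by
  rw [dp, dif_pos (⟨p, h⟩ : ∃ p, IsPathFromTo E a p i)]
  congr 1
  exact path_unique hlt htree (Exists.choose_spec (⟨p, h⟩ : ∃ p, IsPathFromTo E a p i)) h

lemma dp_eq_zero {a i : Fin n} (h : ¬ ∃ p, IsPathFromTo E a p i) : dp E Λ a i = 0 := by
  rw [dp, dif_neg h]

lemma exists_path_of_dp_ne_zero {a i : Fin n} (h : dp E Λ a i ≠ 0) :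
    ∃ p, IsPathFromTo E a p i := by
  by_contra hc; exact h (dp_eq_zero hc)

lemma path_self (v : Fin n) : IsPathFromTo E v [v] v :=
  ⟨trivial, rfl, rfl⟩

lemma dp_self (hlt : ∀ i j, E i j → i < j) (htree : (underlying E).IsTree) (v : Fin n) :
    dp E Λ v v = 1 := by
  rw [dp_eq_pathProd hlt htree (path_self v)]; rfl

lemma dp_mul (hlt : ∀ i j, E i j → i < j) (htree : (underlying E).IsTree) {a v i : Fin n}
    (h1 : ∃ p, IsPathFromTo E a p v) (h2 : ∃ q, IsPathFromTo E v q i) :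
    dp E Λ a i = dp E Λ a v * dp E Λ v i := by
  obtain ⟨p, hp⟩ := h1; obtain ⟨q, hq⟩ := h2
  rw [dp_eq_pathProd hlt htree (path_concat hp hq), dp_eq_pathProd hlt htree hp,
    dp_eq_pathProd hlt htree hq,
    pathProd_concat _ _ (isPathFromTo_iff.1 hp).2.2 (isPathFromTo_iff.1 hq).2.1]

lemma one_sub_mul_dp (hlt : ∀ i j, E i j → i < j) (htree : (underlying E).IsTree)
    (hsupp : Supported E Λ) : (1 - Λ) * Matrix.of (dp E Λ) = 1 := by
  ext a i
  rw [Matrix.sub_mul, Matrix.one_mul, Matrix.sub_apply, Matrix.mul_apply]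
  by_cases hai : a = i
  · subst hai
    rw [Matrix.one_apply_eq]
    have hz : ∀ b ∈ Finset.univ, Λ a b * Matrix.of (dp E Λ) b a = 0 := by
      intro b _
      by_cases hb : Λ a b = 0
      · rw [hb, zero_mul]
      · have hE : E a b := by by_contra hE; exact hb (hsupp a b hE)
        have hd : dp E Λ b a = 0 := by
          apply dp_eq_zero
          rintro ⟨p, hp⟩
          exact absurd (path_le hlt hp) (not_le.2 (hlt a b hE))
        simp [hd]
    rw [Finset.sum_eq_zero hz, sub_zero, Matrix.of_apply, dp_self hlt htree]
  · rw [Matrix.one_apply_ne hai]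
    by_cases hex : ∃ p, IsPathFromTo E a p i
    · obtain ⟨p, hp⟩ := hex
      obtain ⟨t, rfl⟩ := hp.exists_cons
      cases t with
      | nil =>
        obtain ⟨-, -, f⟩ := hp
        simp only [List.getLast?_singleton, Option.some.injEq] at f
        exact absurd f hai
      | cons b t' =>
        have hab : E a b := (List.isChain_cons_cons.1 (isPathFromTo_iff.1 hp).1).1
        have hbt : IsPathFromTo E b (b :: t') i := by
          refine isPathFromTo_iff.2 ⟨(isPathFromTo_iff.1 hp).1.tail, rfl, ?_⟩
          have := (isPathFromTo_iff.1 hp).2.2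
          rwa [List.getLast?_cons_cons] at this
        rw [Finset.sum_eq_single b]
        · simp only [Matrix.of_apply]
          rw [dp_eq_pathProd hlt htree hbt, dp_eq_pathProd hlt htree hp]
          show pathProd (fun x y => Λ x y) (a :: b :: t') - _ = 0
          show Λ a b * pathProd (fun x y => Λ x y) (b :: t') - _ = 0
          ring
        · intro c _ hcb
          by_cases hc : Λ a c = 0
          · rw [hc, zero_mul]
          · have hE : E a c := by by_contra hE; exact hc (hsupp a c hE)
            have hd : dp E Λ c i = 0 := by
              apply dp_eq_zero
              rintro ⟨u, hu⟩
              have hcons := path_cons hE hu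
              have heq2 := path_unique hlt htree hcons hp
              obtain ⟨tu, rfl⟩ := hu.exists_cons
              simp only [List.cons.injEq] at heq2
              exact hcb heq2.2.1
            simp [hd]
        · intro hb; exact absurd (Finset.mem_univ b) hb
    · have h0 : dp E Λ a i = 0 := dp_eq_zero hex
      have hz : ∀ b ∈ Finset.univ, Λ a b * Matrix.of (dp E Λ) b i = 0 := by
        intro b _
        by_cases hb : Λ a b = 0
        · rw [hb, zero_mul]
        · have hE : E a b := by by_contra hE; exact hb (hsupp a b hE)
          have hd : dp E Λ b i = 0 := by
            apply dp_eq_zero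
            rintro ⟨u, hu⟩
            exact hex ⟨a :: u, path_cons hE hu⟩
          simp [hd]
      rw [Finset.sum_eq_zero hz, Matrix.of_apply, h0, sub_zero]

lemma inv_one_sub_eq (hlt : ∀ i j, E i j → i < j) (htree : (underlying E).IsTree)
    (hsupp : Supported E Λ) : (1 - Λ)⁻¹ = Matrix.of (dp E Λ) :=
  Matrix.inv_eq_right_inv (one_sub_mul_dp hlt htree hsupp)

/-- Meeting lemma: if `a` has directed paths to both `i` and `k`, then `a` has a directed
path to the top of any simple 2-trek between `i` and `k`. -/
lemma exists_path_to_top (hlt : ∀ i j, E i j → i < j) (htree : (underlying E).IsTree)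
    {v i k a : Fin n} {p q : List (Fin n)} (hs : IsSimpleTrek2 E v p q i k)
    (hri : ∃ r, IsPathFromTo E a r i) (hsk : ∃ s, IsPathFromTo E a s k) :
    ∃ u, IsPathFromTo E a u v := by
  obtain ⟨⟨hp, hq⟩, hsimp⟩ := hs
  obtain ⟨r, hr⟩ := hri; obtain ⟨s, hsk⟩ := hsk
  obtain ⟨cp, ep, fp⟩ := isPathFromTo_iff.1 hp
  obtain ⟨cq, eq', fq⟩ := isPathFromTo_iff.1 hq
  obtain ⟨cr, er, fr⟩ := isPathFromTo_iff.1 hr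
  obtain ⟨cs, es, fs⟩ := isPathFromTo_iff.1 hsk
  obtain ⟨wp, hwp⟩ := exists_walk hlt p v i cp ep fp
  obtain ⟨wq, hwq⟩ := exists_walk hlt q v k cq eq' fq
  obtain ⟨wr, hwr⟩ := exists_walk hlt r a i cr er fr
  obtain ⟨ws, hws⟩ := exists_walk hlt s a k cs es fs
  have hPsupp : (wp.reverse.append wq).support = p.reverse ++ q.tail := by
    rw [SimpleGraph.Walk.support_append, SimpleGraph.Walk.support_reverse, hwp, hwq]
  have hPpath : (wp.reverse.append wq).IsPath := by
    refine SimpleGraph.Walk.IsPath.mk' ?_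
    rw [hPsupp]
    refine List.Nodup.append (List.nodup_reverse.2 (path_nodup hlt hp)) ((path_nodup hlt hq).tail) ?_
    intro x hx hx'
    have hxp : x ∈ p := List.mem_reverse.1 hx
    have hxq : x ∈ q := List.mem_of_mem_tail hx'
    have hxv : x = v := hsimp x hxp hxq
    subst hxv
    obtain ⟨t, rfl⟩ := hq.exists_cons
    exact (List.nodup_cons.1 (path_nodup hlt hq)).1 hx'
  have hbyp : (wr.reverse.append ws).bypass = wp.reverse.append wq :=
    (htree.existsUnique_path i k).unique (wr.reverse.append ws).bypass_isPath hPpath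
  have hv : v ∈ (wr.reverse.append ws).support := by
    apply SimpleGraph.Walk.support_bypass_subset
    rw [hbyp, hPsupp]
    exact List.mem_append_left _ (List.mem_reverse.2 (path_head_mem hp))
  rw [SimpleGraph.Walk.support_append, SimpleGraph.Walk.support_reverse, hwr, hws] at hv
  rcases List.mem_append.1 hv with h | h
  · obtain ⟨p₁, p₂, h1, -, -⟩ := path_split hr (List.mem_reverse.1 h)
    exact ⟨p₁, h1⟩
  · obtain ⟨p₁, p₂, h1, -, -⟩ := path_split hsk (List.mem_of_mem_tail h)
    exact ⟨p₁, h1⟩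

/-- Any 2-trek can be refined to a simple 2-trek. -/
lemma trek2_simple (hlt : ∀ i j, E i j → i < j) {i j : Fin n} (h : Trek2Exists E i j) :
    ∃ w p q, IsSimpleTrek2 E w p q i j := by
  classical
  obtain ⟨v, p, q, hp, hq⟩ := h
  have hne : (Finset.univ.filter (fun x => x ∈ p ∧ x ∈ q)).Nonempty :=
    ⟨v, by simp [path_head_mem hp, path_head_mem hq]⟩
  have hwC := Finset.max'_mem _ hne
  rw [Finset.mem_filter] at hwC
  obtain ⟨p₁, p₂, -, hp₂, hpe⟩ := path_split hp hwC.2.1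
  obtain ⟨q₁, q₂, -, hq₂, hqe⟩ := path_split hq hwC.2.2
  refine ⟨_, p₂, q₂, ⟨hp₂, hq₂⟩, ?_⟩
  intro x hxp hxq
  obtain ⟨t, ht⟩ := hp₂.exists_cons
  obtain ⟨t', ht'⟩ := hq₂.exists_cons
  have hxP : x ∈ p := by
    have hxp' := hxp
    rw [ht] at hxp'
    rcases List.mem_cons.1 hxp' with rfl | hx
    · exact hwC.2.1
    · rw [hpe, ht, List.tail_cons]; exact List.mem_append_right _ hx
  have hxQ : x ∈ q := by
    have hxq' := hxq
    rw [ht'] at hxq'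
    rcases List.mem_cons.1 hxq' with rfl | hx
    · exact hwC.2.2
    · rw [hqe, ht', List.tail_cons]; exact List.mem_append_right _ hx
  have hxC : x ∈ Finset.univ.filter (fun x => x ∈ p ∧ x ∈ q) := by
    rw [Finset.mem_filter]; exact ⟨Finset.mem_univ x, hxP, hxQ⟩
  exact le_antisymm (Finset.le_max' _ x hxC) (path_head_le hlt hp₂ hxp)

end Aux2
section Aux3

variable {E : Fin n → Fin n → Prop}

lemma second_common (hlt : ∀ i j, E i j → i < j) (htree : (underlying E).IsTree)
    {v i l w : Fin n} {p q : List (Fin n)}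
    (hp : IsPathFromTo E v p i) (hq : IsPathFromTo E v q l)
    (hw : w ∈ p) (hw' : w ∈ q) (hne : w ≠ v) :
    ∃ x, x ≠ v ∧ p.tail.head? = some x ∧ q.tail.head? = some x := by
  obtain ⟨p₁, p₂, hp₁, -, hpe⟩ := path_split hp hw
  obtain ⟨q₁, q₂, hq₁, -, hqe⟩ := path_split hq hw'
  have heq : p₁ = q₁ := path_unique hlt htree hp₁ hq₁
  obtain ⟨t, ht⟩ := hp₁.exists_cons
  cases t with
  | nil =>
    exfalso
    have := (isPathFromTo_iff.1 hp₁).2.2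
    rw [ht] at this
    simp only [List.getLast?_singleton, Option.some.injEq] at this
    exact hne this.symm
  | cons x t' =>
    have hvx : E v x := by
      have := (isPathFromTo_iff.1 hp₁).1
      rw [ht] at this
      exact (List.isChain_cons_cons.1 this).1
    refine ⟨x, (hlt v x hvx).ne', ?_, ?_⟩
    · rw [hpe, ht]; simp
    · rw [hqe, ← heq, ht]; simp

lemma simple3_pair (hlt : ∀ i j, E i j → i < j) (htree : (underlying E).IsTree)
    {v i l m : Fin n} {p q r : List (Fin n)} (hs : IsSimpleTrek3 E v p q r i l m) :
    (∀ w, w ∈ p → w ∈ q → w = v) ∨ (∀ w, w ∈ p → w ∈ r → w = v) ∨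
      (∀ w, w ∈ q → w ∈ r → w = v) := by
  obtain ⟨⟨hp, hq, hr⟩, hsimp⟩ := hs
  by_contra hcon
  push_neg at hcon
  obtain ⟨⟨w1, hw1p, hw1q, hne1⟩, ⟨w2, hw2p, hw2r, hne2⟩, -⟩ := hcon
  obtain ⟨x, hxv, hxp, hxq⟩ := second_common hlt htree hp hq hw1p hw1q hne1
  obtain ⟨y, -, hyp, hyr⟩ := second_common hlt htree hp hr hw2p hw2r hne2
  rw [hxp, Option.some.injEq] at hyp
  subst hyp
  have hxP : x ∈ p := List.mem_of_mem_tail (mem_of_head?_eq hxp)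
  have hxQ : x ∈ q := List.mem_of_mem_tail (mem_of_head?_eq hxq)
  have hxR : x ∈ r := List.mem_of_mem_tail (mem_of_head?_eq hyr)
  exact hxv (hsimp x hxP hxQ hxR)

lemma exists_path_to_top3 (hlt : ∀ i j, E i j → i < j) (htree : (underlying E).IsTree)
    {v i l m a : Fin n} {p q r : List (Fin n)} (hs : IsSimpleTrek3 E v p q r i l m)
    (h1 : ∃ u, IsPathFromTo E a u i) (h2 : ∃ u, IsPathFromTo E a u l)
    (h3 : ∃ u, IsPathFromTo E a u m) : ∃ u, IsPathFromTo E a u v := by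
  obtain ⟨hp, hq, hr⟩ := hs.1
  rcases simple3_pair hlt htree hs with h | h | h
  · exact exists_path_to_top hlt htree ⟨⟨hp, hq⟩, h⟩ h1 h2
  · exact exists_path_to_top hlt htree ⟨⟨hp, hr⟩, h⟩ h1 h3
  · exact exists_path_to_top hlt htree ⟨⟨hq, hr⟩, h⟩ h2 h3

variable {Λ : Matrix (Fin n) (Fin n) ℝ}

lemma key2 (hlt : ∀ i j, E i j → i < j) (htree : (underlying E).IsTree)
    {v i k : Fin n} {p q : List (Fin n)} (hs : IsSimpleTrek2 E v p q i k) (a : Fin n) :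
    dp E Λ a i * dp E Λ a k = dp E Λ a v * dp E Λ a v * (dp E Λ v i * dp E Λ v k) := by
  by_cases hi : ∃ u, IsPathFromTo E a u i
  · by_cases hk : ∃ u, IsPathFromTo E a u k
    · have hv := exists_path_to_top hlt htree hs hi hk
      rw [dp_mul hlt htree hv ⟨p, hs.1.1⟩, dp_mul hlt htree hv ⟨q, hs.1.2⟩]
      ring
    · have h1 : dp E Λ a k = 0 := dp_eq_zero hk
      have h2 : dp E Λ a v = 0 := by
        apply dp_eq_zero
        rintro ⟨u, hu⟩
        exact hk ⟨_, path_concat hu hs.1.2⟩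
      rw [h1, h2]; ring
  · have h1 : dp E Λ a i = 0 := dp_eq_zero hi
    have h2 : dp E Λ a v = 0 := by
      apply dp_eq_zero
      rintro ⟨u, hu⟩
      exact hi ⟨_, path_concat hu hs.1.1⟩
    rw [h1, h2]; ring

lemma key3 (hlt : ∀ i j, E i j → i < j) (htree : (underlying E).IsTree)
    {v i l m : Fin n} {p q r : List (Fin n)} (hs : IsSimpleTrek3 E v p q r i l m)
    (a : Fin n) :
    dp E Λ a i * dp E Λ a l * dp E Λ a m =
      dp E Λ a v * dp E Λ a v * dp E Λ a v * (dp E Λ v i * dp E Λ v l * dp E Λ v m) := by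
  by_cases hi : ∃ u, IsPathFromTo E a u i
  · by_cases hl : ∃ u, IsPathFromTo E a u l
    · by_cases hm : ∃ u, IsPathFromTo E a u m
      · have hv := exists_path_to_top3 hlt htree hs hi hl hm
        rw [dp_mul hlt htree hv ⟨p, hs.1.1⟩, dp_mul hlt htree hv ⟨q, hs.1.2.1⟩,
          dp_mul hlt htree hv ⟨r, hs.1.2.2⟩]
        ring
      · have h1 : dp E Λ a m = 0 := dp_eq_zero hm
        have h2 : dp E Λ a v = 0 := by
          apply dp_eq_zero; rintro ⟨u, hu⟩
          exact hm ⟨_, path_concat hu hs.1.2.2⟩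
        rw [h1, h2]; ring
    · have h1 : dp E Λ a l = 0 := dp_eq_zero hl
      have h2 : dp E Λ a v = 0 := by
        apply dp_eq_zero; rintro ⟨u, hu⟩
        exact hl ⟨_, path_concat hu hs.1.2.1⟩
      rw [h1, h2]; ring
  · have h1 : dp E Λ a i = 0 := dp_eq_zero hi
    have h2 : dp E Λ a v = 0 := by
      apply dp_eq_zero; rintro ⟨u, hu⟩
      exact hi ⟨_, path_concat hu hs.1.1⟩
    rw [h1, h2]; ring

lemma sform_eq (hlt : ∀ i j, E i j → i < j) (htree : (underlying E).IsTree)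
    {v i k : Fin n} {p q : List (Fin n)} (hs : IsSimpleTrek2 E v p q i k)
    (ω : Fin n → ℝ) :
    ∑ a, ω a * dp E Λ a i * dp E Λ a k =
      (∑ a, ω a * dp E Λ a v * dp E Λ a v) * (dp E Λ v i * dp E Λ v k) := by
  rw [Finset.sum_mul]
  refine Finset.sum_congr rfl fun a _ => ?_
  have h := key2 (Λ := Λ) hlt htree hs a
  calc ω a * dp E Λ a i * dp E Λ a k = ω a * (dp E Λ a i * dp E Λ a k) := by ring
    _ = ω a * (dp E Λ a v * dp E Λ a v * (dp E Λ v i * dp E Λ v k)) := by rw [h]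
    _ = ω a * dp E Λ a v * dp E Λ a v * (dp E Λ v i * dp E Λ v k) := by ring

lemma tform_eq (hlt : ∀ i j, E i j → i < j) (htree : (underlying E).IsTree)
    {v i l m : Fin n} {p q r : List (Fin n)} (hs : IsSimpleTrek3 E v p q r i l m)
    (ω : Fin n → ℝ) :
    ∑ a, ω a * dp E Λ a i * dp E Λ a l * dp E Λ a m =
      (∑ a, ω a * dp E Λ a v * dp E Λ a v * dp E Λ a v) *
        (dp E Λ v i * dp E Λ v l * dp E Λ v m) := by
  rw [Finset.sum_mul]
  refine Finset.sum_congr rfl fun a _ => ?_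
  have h := key3 (Λ := Λ) hlt htree hs a
  calc ω a * dp E Λ a i * dp E Λ a l * dp E Λ a m
      = ω a * (dp E Λ a i * dp E Λ a l * dp E Λ a m) := by ring
    _ = ω a * (dp E Λ a v * dp E Λ a v * dp E Λ a v *
          (dp E Λ v i * dp E Λ v l * dp E Λ v m)) := by rw [h]
    _ = ω a * dp E Λ a v * dp E Λ a v * dp E Λ a v *
          (dp E Λ v i * dp E Λ v l * dp E Λ v m) := by ring

lemma momentS_apply (hlt : ∀ i j, E i j → i < j) (htree : (underlying E).IsTree)
    (hsupp : Supported E Λ) (ω : Fin n → ℝ) (i k : Fin n) :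
    momentS Λ ω i k = ∑ a, ω a * dp E Λ a i * dp E Λ a k := by
  rw [momentS, inv_one_sub_eq hlt htree hsupp, Matrix.mul_apply]
  refine Finset.sum_congr rfl fun a _ => ?_
  rw [Matrix.mul_diagonal, Matrix.transpose_apply, Matrix.of_apply, Matrix.of_apply]
  ring

lemma momentT_apply (hlt : ∀ i j, E i j → i < j) (htree : (underlying E).IsTree)
    (hsupp : Supported E Λ) (ω : Fin n → ℝ) (i j k : Fin n) :
    momentT Λ ω i j k = ∑ a, ω a * dp E Λ a i * dp E Λ a j * dp E Λ a k := by
  rw [momentT]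
  refine Finset.sum_congr rfl fun a _ => ?_
  rw [inv_one_sub_eq hlt htree hsupp]
  rfl

end Aux3
section Aux4

lemma tsum_sorted (d : Fin n → Fin n → ℝ) (ω : Fin n → ℝ) (i j k : Fin n) :
    ∑ a, ω a * d a (min i (min j k)) * d a (mid3 i j k) * d a (max i (max j k)) =
      ∑ a, ω a * d a i * d a j * d a k := by
  rcases le_total i j with hij | hij <;> rcases le_total j k with hjk | hjk <;>
    rcases le_total i k with hik | hik
  · have h1 : min i (min j k) = i := by rw [min_eq_left hjk]; exact min_eq_left hij
    have h2 : mid3 i j k = j := by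
      rw [mid3, min_eq_left hij, max_eq_right hij, min_eq_left hjk, max_eq_right hij]
    have h3 : max i (max j k) = k := by rw [max_eq_right hjk]; exact max_eq_right hik
    rw [h1, h2, h3]
  · obtain rfl := le_antisymm hij (hjk.trans hik)
    obtain rfl := le_antisymm hjk hik
    simp [mid3]
  · have h1 : min i (min j k) = i := by rw [min_eq_right hjk]; exact min_eq_left hik
    have h2 : mid3 i j k = k := by
      rw [mid3, min_eq_left hij, max_eq_right hij, min_eq_right hjk, max_eq_right hik]
    have h3 : max i (max j k) = j := by rw [max_eq_left hjk]; exact max_eq_right hij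
    rw [h1, h2, h3]
    exact Finset.sum_congr rfl fun a _ => by ring
  · have h1 : min i (min j k) = k := by rw [min_eq_right hjk]; exact min_eq_right hik
    have h2 : mid3 i j k = i := by
      rw [mid3, min_eq_left hij, max_eq_right hij, min_eq_right hjk, max_eq_left hik]
    have h3 : max i (max j k) = j := by rw [max_eq_left hjk]; exact max_eq_right hij
    rw [h1, h2, h3]
    exact Finset.sum_congr rfl fun a _ => by ring
  · have h1 : min i (min j k) = j := by rw [min_eq_left hjk]; exact min_eq_right hij
    have h2 : mid3 i j k = i := by
      rw [mid3, min_eq_right hij, max_eq_left hij, min_eq_left hik, max_eq_right hij]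
    have h3 : max i (max j k) = k := by rw [max_eq_right hjk]; exact max_eq_right hik
    rw [h1, h2, h3]
    exact Finset.sum_congr rfl fun a _ => by ring
  · have h1 : min i (min j k) = j := by rw [min_eq_left hjk]; exact min_eq_right hij
    have h2 : mid3 i j k = k := by
      rw [mid3, min_eq_right hij, max_eq_left hij, min_eq_right hik, max_eq_right hjk]
    have h3 : max i (max j k) = i := by rw [max_eq_right hjk]; exact max_eq_left hik
    rw [h1, h2, h3]
    exact Finset.sum_congr rfl fun a _ => by ring
  · obtain rfl := le_antisymm hik (hjk.trans hij)
    obtain rfl := le_antisymm hjk hij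
    simp [mid3]
  · have h1 : min i (min j k) = k := by rw [min_eq_right hjk]; exact min_eq_right hik
    have h2 : mid3 i j k = j := by
      rw [mid3, min_eq_right hij, max_eq_left hij, min_eq_right hik, max_eq_left hjk]
    have h3 : max i (max j k) = i := by rw [max_eq_left hjk]; exact max_eq_left hij
    rw [h1, h2, h3]
    exact Finset.sum_congr rfl fun a _ => by ring

end Aux4
/-- For any two vertices `i, j` of a polytree joined by a 2-trek, every
`2 × 2` minor of the trek-matrix `A_{i,j}` lies in `I^{≤3}(G)`. -/
theorem trek_minors_in_ideal (n : ℕ) (E : Fin n → Fin n → Prop) (hG : IsPolytree E)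
    (i j : Fin n) (h2 : Trek2Exists E i j) (f : MvPolynomial (MomVar n) ℝ)
    (hf : IsTrekMinorOf E i j f) : f ∈ momentIdeal E := by
  obtain ⟨hlt, htree⟩ := hG
  intro S T hST
  obtain ⟨Λ, ω2, ω3, hsupp, hpos, hS, hT⟩ := hST
  subst hS; subst hT
  have hsv : ∀ x y : Fin n,
      eval (evalVar (momentS Λ ω2) (momentT Λ ω3)) (svar x y) =
        ∑ a, ω2 a * dp E Λ a x * dp E Λ a y := by
    intro x y
    simp only [svar, eval_X]
    show momentS Λ ω2 (min x y) (max x y) = _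
    rcases le_total x y with h | h
    · rw [min_eq_left h, max_eq_right h, momentS_apply hlt htree hsupp]
    · rw [min_eq_right h, max_eq_left h, momentS_apply hlt htree hsupp]
      exact Finset.sum_congr rfl fun a _ => by ring
  have htv : ∀ x y z : Fin n,
      eval (evalVar (momentS Λ ω2) (momentT Λ ω3)) (tvar x y z) =
        ∑ a, ω3 a * dp E Λ a x * dp E Λ a y * dp E Λ a z := by
    intro x y z
    simp only [tvar, eval_X]
    show momentT Λ ω3 (min x (min y z)) (mid3 x y z) (max x (max y z)) = _
    rw [momentT_apply hlt htree hsupp]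
    exact tsum_sorted _ _ x y z
  obtain ⟨w, pw, qw, hw⟩ := trek2_simple hlt h2
  rcases hf with ⟨k, k', ⟨v, ⟨p1, q1, hik⟩, ⟨p2, q2, hjk⟩⟩,
      ⟨v', ⟨p3, q3, hik'⟩, ⟨p4, q4, hjk'⟩⟩, rfl⟩ |
    ⟨k, l, m, ⟨v, ⟨p1, q1, hik⟩, ⟨p2, q2, hjk⟩⟩,
      ⟨v', ⟨p3, q3, r3, hilm⟩, ⟨p4, q4, r4, hjlm⟩⟩, rfl⟩ |
    ⟨l, m, l', m', ⟨v, ⟨p1, q1, r1, hilm⟩, ⟨p2, q2, r2, hjlm⟩⟩,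
      ⟨v', ⟨p3, q3, r3, hilm'⟩, ⟨p4, q4, r4, hjlm'⟩⟩, rfl⟩
  · rw [map_sub, _root_.map_mul, _root_.map_mul, hsv, hsv, hsv, hsv,
      sform_eq hlt htree hik ω2, sform_eq hlt htree hjk ω2,
      sform_eq hlt htree hik' ω2, sform_eq hlt htree hjk' ω2]
    obtain ⟨u, hu⟩ := exists_path_to_top hlt htree hw ⟨p1, hik.1.1⟩ ⟨p2, hjk.1.1⟩
    obtain ⟨u', hu'⟩ := exists_path_to_top hlt htree hw ⟨p3, hik'.1.1⟩ ⟨p4, hjk'.1.1⟩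
    rw [dp_mul hlt htree ⟨u, hu⟩ ⟨pw, hw.1.1⟩, dp_mul hlt htree ⟨u, hu⟩ ⟨qw, hw.1.2⟩,
      dp_mul hlt htree ⟨u', hu'⟩ ⟨pw, hw.1.1⟩, dp_mul hlt htree ⟨u', hu'⟩ ⟨qw, hw.1.2⟩]
    ring
  · rw [map_sub, _root_.map_mul, _root_.map_mul, hsv, hsv, htv, htv,
      sform_eq hlt htree hik ω2, sform_eq hlt htree hjk ω2,
      tform_eq hlt htree hilm ω3, tform_eq hlt htree hjlm ω3]
    obtain ⟨u, hu⟩ := exists_path_to_top hlt htree hw ⟨p1, hik.1.1⟩ ⟨p2, hjk.1.1⟩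
    obtain ⟨u', hu'⟩ := exists_path_to_top hlt htree hw ⟨p3, hilm.1.1⟩ ⟨p4, hjlm.1.1⟩
    rw [dp_mul hlt htree ⟨u, hu⟩ ⟨pw, hw.1.1⟩, dp_mul hlt htree ⟨u, hu⟩ ⟨qw, hw.1.2⟩,
      dp_mul hlt htree ⟨u', hu'⟩ ⟨pw, hw.1.1⟩, dp_mul hlt htree ⟨u', hu'⟩ ⟨qw, hw.1.2⟩]
    ring
  · rw [map_sub, _root_.map_mul, _root_.map_mul, htv, htv, htv, htv,
      tform_eq hlt htree hilm ω3, tform_eq hlt htree hjlm ω3,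
      tform_eq hlt htree hilm' ω3, tform_eq hlt htree hjlm' ω3]
    obtain ⟨u, hu⟩ := exists_path_to_top hlt htree hw ⟨p1, hilm.1.1⟩ ⟨p2, hjlm.1.1⟩
    obtain ⟨u', hu'⟩ := exists_path_to_top hlt htree hw ⟨p3, hilm'.1.1⟩ ⟨p4, hjlm'.1.1⟩
    rw [dp_mul hlt htree ⟨u, hu⟩ ⟨pw, hw.1.1⟩, dp_mul hlt htree ⟨u, hu⟩ ⟨qw, hw.1.2⟩,
      dp_mul hlt htree ⟨u', hu'⟩ ⟨pw, hw.1.1⟩, dp_mul hlt htree ⟨u', hu'⟩ ⟨qw, hw.1.2⟩]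
    ring

end LNG
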